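/- In the Dawid–Skene model, a sufficient condition for the slope α^ℓ = E_{i'}[M_{i'} ℓ ℓ] − E_{i'}[Σ_{τ≠ℓ} q τ M_i τ ℓ M_{i'} τ ℓ]/(Σ_{τ≠ℓ} q τ M_i τ ℓ) in the conditional Anna Karenina linear relation to be positive is that E_{i'}[M_{i'} ℓ ℓ] > E_{i'}[M_{i'} τ ℓ] for every τ ≠ ℓ. -/

import Mathlib

open Finset

theorem stmt_12 (k : ℕ) (q : Fin k → ℝ) (Mi : Fin k → Fin k → ℝ) (ℓ : Fin k)
    (hq : ∀ τ, 0 ≤ q τ) (hMi : ∀ τ ℓ', 0 ≤ Mi τ ℓ')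
    (W : Type*) [Fintype W] (w : W → ℝ) (M' : W → Fin k → Fin k → ℝ)
    (hw : ∀ i', 0 ≤ w i') (hwsum : ∑ i', w i' = 1)
    (Y : ℝ) (hY : Y = ∑ τ ∈ univ \ {ℓ}, q τ * Mi τ ℓ) (hYpos : 0 < Y)
    (hdom : ∀ τ ∈ univ \ {ℓ}, ∑ i', w i' * M' i' τ ℓ < ∑ i', w i' * M' i' ℓ ℓ) :
    0 < (∑ i', w i' * M' i' ℓ ℓ)
        - (∑ i', w i' * ∑ τ ∈ univ \ {ℓ}, q τ * Mi τ ℓ * M' i' τ ℓ) / Y := by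
  set A : ℝ := ∑ i', w i' * M' i' ℓ ℓ with hA
  have hswap : (∑ i', w i' * ∑ τ ∈ univ \ {ℓ}, q τ * Mi τ ℓ * M' i' τ ℓ)
      = ∑ τ ∈ univ \ {ℓ}, q τ * Mi τ ℓ * (∑ i', w i' * M' i' τ ℓ) := by
    simp_rw [Finset.mul_sum]
    rw [Finset.sum_comm]
    refine Finset.sum_congr rfl fun τ _ => ?_
    exact Finset.sum_congr rfl fun i' _ => by ring
  have hex : ∃ τ ∈ univ \ {ℓ}, 0 < q τ * Mi τ ℓ := by
    by_contra h
    push_neg at h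
    have : Y ≤ 0 := by
      rw [hY]
      exact Finset.sum_nonpos fun τ hτ => h τ hτ
    linarith
  have hlt : (∑ τ ∈ univ \ {ℓ}, q τ * Mi τ ℓ * (∑ i', w i' * M' i' τ ℓ))
      < ∑ τ ∈ univ \ {ℓ}, q τ * Mi τ ℓ * A := by
    obtain ⟨τ₀, hτ₀, hpos⟩ := hex
    refine Finset.sum_lt_sum (fun τ hτ => ?_) ⟨τ₀, hτ₀, ?_⟩
    · exact mul_le_mul_of_nonneg_left (le_of_lt (hdom τ hτ))
        (mul_nonneg (hq τ) (hMi τ ℓ))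
    · exact mul_lt_mul_of_pos_left (hdom τ₀ hτ₀) hpos
  have hYA : (∑ τ ∈ univ \ {ℓ}, q τ * Mi τ ℓ * A) = Y * A := by
    rw [hY, Finset.sum_mul]
  rw [sub_pos, div_lt_iff₀ hYpos, hswap]
  calc (∑ τ ∈ univ \ {ℓ}, q τ * Mi τ ℓ * (∑ i', w i' * M' i' τ ℓ))
      < Y * A := by rw [← hYA]; exact hlt
    _ = A * Y := mul_comm _ _
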